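/- Fix a ∈ (0, π) and β ∈ ℝ. Let I ⊆ (0, π) be an open interval and b : I → (0, ∞), α : I → ℝ functions such that for every c ∈ I: cosh(b(c)) = cos c · cos a + sin c · sin a · cosh β, and cos a = cosh(b(c)) · cos c − sinh(b(c)) · sin c · sinh(α(c)). Then α is differentiable on I with α′(c) = − cosh(b(c)) · cosh(α(c)) / sinh(b(c)) for every c ∈ I. -/

import Mathlib

open Real Set

/-- de Sitter trigonometry for a triangle with two time-like edges `ia, ic` and a
space-like edge `b`: with `a, β` fixed and `b`, `α` determined by the cosine laws
as functions of `c`, one has `∂α/∂c = - cosh b · cosh α / sinh b`. -/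
theorem stmt_12 (a β : ℝ) (ha : a ∈ Ioo 0 π)
    (lo hi : ℝ) (hI : Ioo lo hi ⊆ Ioo 0 π)
    (b α : ℝ → ℝ)
    (hb : ∀ c ∈ Ioo lo hi, 0 < b c)
    (law1 : ∀ c ∈ Ioo lo hi, cosh (b c) = cos c * cos a + sin c * sin a * cosh β)
    (law2 : ∀ c ∈ Ioo lo hi, cos a = cosh (b c) * cos c - sinh (b c) * sin c * sinh (α c)) :
    ∀ c ∈ Ioo lo hi, HasDerivAt α (-(cosh (b c) * cosh (α c)) / sinh (b c)) c := by
  set K := sin a * cosh β with hK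
  set F : ℝ → ℝ := fun x => cos x * cos a + sin x * K with hFdef
  set S : ℝ → ℝ := fun x => Real.sqrt (F x ^ 2 - 1) with hSdef
  set g : ℝ → ℝ := fun x => (F x * cos x - cos a) / (S x * sin x) with hgdef
  -- basic facts on the interval
  have hFc : ∀ x ∈ Ioo lo hi, cosh (b x) = F x := by
    intro x hx
    rw [law1 x hx]
    ring
  have hF1 : ∀ x ∈ Ioo lo hi, 1 < F x := by
    intro x hx
    rw [← hFc x hx]
    exact Real.one_lt_cosh.2 (ne_of_gt (hb x hx))
  have hSpos : ∀ x ∈ Ioo lo hi, 0 < S x := by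
    intro x hx
    apply Real.sqrt_pos.2
    nlinarith [hF1 x hx]
  have hsinhb : ∀ x ∈ Ioo lo hi, sinh (b x) = S x := by
    intro x hx
    have h1 : sinh (b x) ^ 2 = F x ^ 2 - 1 := by rw [Real.sinh_sq, hFc x hx]
    have h2 : 0 ≤ sinh (b x) := le_of_lt (Real.sinh_pos_iff.2 (hb x hx))
    show sinh (b x) = Real.sqrt (F x ^ 2 - 1)
    rw [← h1, Real.sqrt_sq h2]
  have hsin : ∀ x ∈ Ioo lo hi, 0 < sin x := by
    intro x hx
    exact Real.sin_pos_of_pos_of_lt_pi (hI hx).1 (hI hx).2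
  have hαeq : ∀ x ∈ Ioo lo hi, α x = Real.arsinh (g x) := by
    intro x hx
    have h2 := law2 x hx
    have hsx := hsin x hx
    have hSx := hSpos x hx
    have hgval : sinh (α x) = g x := by
      show sinh (α x) = (F x * cos x - cos a) / (S x * sin x)
      have hbx : 0 < sinh (b x) := Real.sinh_pos_iff.2 (hb x hx)
      rw [← hFc x hx, ← hsinhb x hx, eq_div_iff (by positivity)]
      linear_combination h2
    rw [← hgval, Real.arsinh_sinh]
  -- now fix c
  intro c hc
  have hscpos := hsin c hc
  have hF1c := hF1 c hc
  have hSc := hSpos c hc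
  have hSne : S c ≠ 0 := ne_of_gt hSc
  have hscne : sin c ≠ 0 := ne_of_gt hscpos
  have hS2 : S c ^ 2 = F c ^ 2 - 1 := Real.sq_sqrt (by nlinarith)
  set F' : ℝ := -(sin c * cos a) + cos c * K with hF'def
  have hF' : HasDerivAt F F' c := by
    have h := ((Real.hasDerivAt_cos c).mul_const (cos a)).add ((Real.hasDerivAt_sin c).mul_const K)
    refine h.congr_deriv ?_
    rw [hF'def]; ring
  have hSq : HasDerivAt (fun x => F x ^ 2 - 1) (2 * F c * F') c := by
    have h := (hF'.pow 2).sub_const (1 : ℝ)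
    refine h.congr_deriv ?_
    push_cast; ring
  have hS' : HasDerivAt S (F c * F' / S c) c := by
    have hne : F c ^ 2 - 1 ≠ 0 := by nlinarith
    have h := (Real.hasDerivAt_sqrt hne).comp c hSq
    refine h.congr_deriv ?_
    show 1 / (2 * S c) * (2 * F c * F') = F c * F' / S c
    field_simp
  have hN : HasDerivAt (fun x => F x * cos x - cos a) (F' * cos c + F c * (-sin c)) c :=
    (hF'.mul (Real.hasDerivAt_cos c)).sub_const _
  have hD : HasDerivAt (fun x => S x * sin x) (F c * F' / S c * sin c + S c * cos c) c :=
    hS'.mul (Real.hasDerivAt_sin c)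
  have hDne : S c * sin c ≠ 0 := mul_ne_zero hSne hscne
  set N : ℝ := F c * cos c - cos a with hNdef
  set V : ℝ := ((F' * cos c - F c * sin c) * (S c ^ 2 * sin c)
      - N * (F c * F' * sin c + S c ^ 2 * cos c)) / (S c * (S c * sin c) ^ 2) with hVdef
  have hg : HasDerivAt g V c := by
    have h := hN.div hD hDne
    refine h.congr_deriv ?_
    rw [hVdef, hNdef]
    field_simp
    ring
  have hga : HasDerivAt (fun x => Real.arsinh (g x)) ((Real.sqrt (1 + g c ^ 2))⁻¹ • V) c :=
    hg.arsinh
  have hαa : HasDerivAt α ((Real.sqrt (1 + g c ^ 2))⁻¹ • V) c := by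
    apply hga.congr_of_eventuallyEq
    filter_upwards [isOpen_Ioo.mem_nhds hc] with x hx
    exact hαeq x hx
  convert hαa using 1
  set Q := cosh (α c) with hQdef
  have hQpos : 0 < Q := Real.cosh_pos _
  have hQne : Q ≠ 0 := ne_of_gt hQpos
  have hQ2 : Q ^ 2 = 1 + g c ^ 2 := by
    rw [hQdef, Real.cosh_sq', hαeq c hc, Real.sinh_arsinh]
  have hQs : Real.sqrt (1 + g c ^ 2) = Q := by
    rw [← hQ2, Real.sqrt_sq (le_of_lt hQpos)]
  rw [hQs, hFc c hc, hsinhb c hc]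
  have hgc : g c = N / (S c * sin c) := rfl
  have hpyth : sin c ^ 2 + cos c ^ 2 = 1 := Real.sin_sq_add_cos_sq c
  have key2 : (F' * cos c - F c * sin c) * (S c ^ 2 * sin c)
      - N * (F c * F' * sin c + S c ^ 2 * cos c)
      = -(F c) * (S c ^ 2 * sin c ^ 2 + N ^ 2) := by
    rw [hS2, hNdef]
    simp only [hFdef, hF'def]
    linear_combination (cos c * cos a - cos c * cos a ^ 3 - sin c * cos a ^ 2 * K) * hpyth
  have hQ2N : (S c * sin c) ^ 2 * Q ^ 2 = (S c * sin c) ^ 2 + N ^ 2 := by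
    rw [hQ2, hgc]
    field_simp
  have hV : V = -(F c) * Q ^ 2 / S c := by
    rw [hVdef, div_eq_div_iff (by positivity) hSne]
    linear_combination S c * key2 + (F c * S c) * hQ2N
  rw [smul_eq_mul, hV]
  field_simp
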